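/- For all u > 0, u - 1 - log u ≥ (1/2)·(u-1)²/(1 + (2/3)(u-1)) + (1/36)·(u-1)⁴/(1 + (28/45)(u-1))³. -/

import Mathlib

open Real Set

noncomputable def pinskerF : ℝ → ℝ := fun u =>
  u - 1 - Real.log u -
    ((1 / 2) * (u - 1) ^ 2 / (1 + (2 / 3) * (u - 1)) +
      (1 / 36) * (u - 1) ^ 4 / (1 + (28 / 45) * (u - 1)) ^ 3)

noncomputable def pinskerG : ℝ → ℝ := fun u =>
  (u - 1) ^ 5 * (2980404 * (u - 1) ^ 2 + 8953740 * (u - 1) + 6725025) /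
    (9 * u * (3 + 2 * (u - 1)) ^ 2 * (45 + 28 * (u - 1)) ^ 4)

lemma pinskerF_hasDerivAt {u : ℝ} (hu : 0 < u) : HasDerivAt pinskerF (pinskerG u) u := by
  have hd1 : (1 : ℝ) + (2 / 3) * (u - 1) ≠ 0 := by nlinarith
  have hd2 : (1 : ℝ) + (28 / 45) * (u - 1) ≠ 0 := by nlinarith
  have hd2' : ((1 : ℝ) + (28 / 45) * (u - 1)) ^ 3 ≠ 0 := pow_ne_zero _ hd2
  have hsub : HasDerivAt (fun x : ℝ => x - 1) 1 u := (hasDerivAt_id u).sub_const 1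
  have hA := HasDerivAt.div ((hsub.pow 2).const_mul (1 / 2 : ℝ))
    ((hsub.const_mul (2 / 3 : ℝ)).const_add 1) hd1
  have hB := HasDerivAt.div ((hsub.pow 4).const_mul (1 / 36 : ℝ))
    (((hsub.const_mul (28 / 45 : ℝ)).const_add 1).pow 3) hd2'
  have hlog := Real.hasDerivAt_log (ne_of_gt hu)
  have htot := ((hasDerivAt_id u).sub_const 1 |>.sub hlog).sub (hA.add hB)
  refine htot.congr_deriv ?_
  have hu' : u ≠ 0 := ne_of_gt hu
  simp only [pinskerG, Pi.pow_apply, Nat.cast_ofNat]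
  norm_num only
  have h3 : (3 : ℝ) + 2 * (u - 1) ≠ 0 := by nlinarith
  have h45 : (45 : ℝ) + 28 * (u - 1) ≠ 0 := by nlinarith
  have h3'' : (3 : ℝ) + (u - 1) * 2 ≠ 0 := by nlinarith
  have h45'' : (45 : ℝ) + (u - 1) * 28 ≠ 0 := by nlinarith
  field_simp
  ring

lemma pinskerF_one : pinskerF 1 = 0 := by
  simp [pinskerF]

lemma pinskerQ_pos (t : ℝ) : 0 < 2980404 * t ^ 2 + 8953740 * t + 6725025 := by
  nlinarith [sq_nonneg (5960808 * t + 8953740)]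

lemma pinskerD_pos {u : ℝ} (hu : 0 < u) :
    0 < 9 * u * (3 + 2 * (u - 1)) ^ 2 * (45 + 28 * (u - 1)) ^ 4 := by
  have h1 : (0 : ℝ) < 3 + 2 * (u - 1) := by linarith
  have h2 : (0 : ℝ) < 45 + 28 * (u - 1) := by linarith
  have h9 : (0 : ℝ) < 9 * u := by linarith
  exact mul_pos (mul_pos h9 (pow_pos h1 2)) (pow_pos h2 4)

lemma pinskerF_nonneg {u : ℝ} (hu : 0 < u) : 0 ≤ pinskerF u := by
  rcases le_total 1 u with h1u | h1u
  · -- monotone on [1, ∞)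
    have mono : MonotoneOn pinskerF (Ici 1) := by
      apply monotoneOn_of_deriv_nonneg (convex_Ici 1)
      · intro x hx
        have hx0 : (0 : ℝ) < x := lt_of_lt_of_le one_pos hx
        exact (pinskerF_hasDerivAt hx0).differentiableAt.continuousAt.continuousWithinAt
      · rw [interior_Ici]
        intro x hx
        have hx0 : (0 : ℝ) < x := lt_trans one_pos hx
        exact (pinskerF_hasDerivAt hx0).differentiableAt.differentiableWithinAt
      · rw [interior_Ici]
        intro x hx
        have hx0 : (0 : ℝ) < x := lt_trans one_pos hx
        rw [(pinskerF_hasDerivAt hx0).deriv]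
        apply div_nonneg _ (le_of_lt (pinskerD_pos hx0))
        have hx1 : (0 : ℝ) ≤ x - 1 := by simpa using le_of_lt hx
        exact mul_nonneg (pow_nonneg hx1 5) (le_of_lt (pinskerQ_pos _))
    have := mono (self_mem_Ici) h1u h1u
    rwa [pinskerF_one] at this
  · -- antitone on [u, 1]
    have anti : AntitoneOn pinskerF (Icc u 1) := by
      apply antitoneOn_of_deriv_nonpos (convex_Icc u 1)
      · intro x hx
        have hx0 : (0 : ℝ) < x := lt_of_lt_of_le hu hx.1
        exact (pinskerF_hasDerivAt hx0).differentiableAt.continuousAt.continuousWithinAt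
      · rw [interior_Icc]
        intro x hx
        have hx0 : (0 : ℝ) < x := lt_trans hu hx.1
        exact (pinskerF_hasDerivAt hx0).differentiableAt.differentiableWithinAt
      · rw [interior_Icc]
        intro x hx
        have hx0 : (0 : ℝ) < x := lt_trans hu hx.1
        rw [(pinskerF_hasDerivAt hx0).deriv]
        apply div_nonpos_of_nonpos_of_nonneg _ (le_of_lt (pinskerD_pos hx0))
        have hx1 : x - 1 ≤ 0 := by linarith [hx.2]
        have h5 : (x - 1) ^ 5 ≤ 0 :=
          Odd.pow_nonpos (by decide) hx1
        exact mul_nonpos_of_nonpos_of_nonneg h5 (le_of_lt (pinskerQ_pos _))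
    have := anti (left_mem_Icc.mpr h1u) (right_mem_Icc.mpr h1u) h1u
    rwa [pinskerF_one] at this

theorem stmt_2 : ∀ u : ℝ, 0 < u →
    u - 1 - Real.log u ≥
      (1 / 2) * (u - 1) ^ 2 / (1 + (2 / 3) * (u - 1)) +
      (1 / 36) * (u - 1) ^ 4 / (1 + (28 / 45) * (u - 1)) ^ 3 := by
  intro u hu
  have h := pinskerF_nonneg hu
  simp only [pinskerF] at h
  linarith
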